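/- Let p, p̂ ∈ (0,1) with p̂ < p. Then kl(p̂ ‖ p) ≥ (p - p̂)² / (2p), where kl(q ‖ q') = q·log(q/q') + (1-q)·log((1-q)/(1-q')) is the binary KL divergence. -/

import Mathlib

noncomputable def binKL (q q' : ℝ) : ℝ :=
  q * Real.log (q / q') + (1 - q) * Real.log ((1 - q) / (1 - q'))

lemma logB_aux (x : ℝ) (hx : 0 < x) : x - 1 ≤ x * Real.log x := by
  have h := Real.log_le_sub_one_of_pos (x := 1/x) (by positivity)
  rw [Real.log_div one_ne_zero (ne_of_gt hx), Real.log_one] at h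
  have hinv : x * (1/x) = 1 := by field_simp
  nlinarith [mul_le_mul_of_nonneg_left h hx.le, hinv]

lemma logA_aux (x : ℝ) (hx : 0 < x) (hx1 : x ≤ 1) :
    (1 - x) ^ 2 / 2 ≤ x * Real.log x - x + 1 := by
  set g : ℝ → ℝ := fun y => y * Real.log y - y + 1 - (1 - y) ^ 2 / 2 with hg
  have hanti : AntitoneOn g (Set.Icc x 1) := by
    apply antitoneOn_of_deriv_nonpos (convex_Icc x 1)
    · apply ContinuousOn.sub
      · apply ContinuousOn.add
        · apply ContinuousOn.sub
          · exact (continuousOn_id.mul (Real.continuousOn_log.mono (by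
              intro y hy; simp only [Set.mem_compl_iff, Set.mem_singleton_iff]
              exact ne_of_gt (lt_of_lt_of_le hx hy.1))))
          · exact continuousOn_id
        · exact continuousOn_const
      · exact (((continuousOn_const.sub continuousOn_id).pow 2).div_const 2)
    · intro y hy
      rw [interior_Icc] at hy
      have hy0 : 0 < y := lt_trans hx hy.1
      have H : HasDerivAt g (Real.log y + 1 - 1 - (1 - y) * (-1)) y := by
        have h1 := Real.hasDerivAt_mul_log (ne_of_gt hy0)
        have h2 : HasDerivAt (fun y : ℝ => (1 - y) ^ 2 / 2) ((1 - y) * (-1)) y := by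
          have : HasDerivAt (fun y : ℝ => (1 - y)) (-1) y :=
            (hasDerivAt_id y).const_sub 1
          have := (this.fun_pow 2).div_const 2
          refine this.congr_deriv ?_
          ring
        exact (((h1.sub (hasDerivAt_id y)).add_const 1).sub h2)
      exact H.differentiableAt.differentiableWithinAt
    · intro y hy
      rw [interior_Icc] at hy
      have hy0 : 0 < y := lt_trans hx hy.1
      have H : HasDerivAt g (Real.log y + 1 - 1 - (1 - y) * (-1)) y := by
        have h1 := Real.hasDerivAt_mul_log (ne_of_gt hy0)
        have h2 : HasDerivAt (fun y : ℝ => (1 - y) ^ 2 / 2) ((1 - y) * (-1)) y := by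
          have : HasDerivAt (fun y : ℝ => (1 - y)) (-1) y :=
            (hasDerivAt_id y).const_sub 1
          have := (this.fun_pow 2).div_const 2
          refine this.congr_deriv ?_
          ring
        exact (((h1.sub (hasDerivAt_id y)).add_const 1).sub h2)
      rw [H.deriv]
      have := Real.log_le_sub_one_of_pos hy0
      nlinarith
  have hmem1 : (1:ℝ) ∈ Set.Icc x 1 := ⟨hx1, le_refl 1⟩
  have hmemx : x ∈ Set.Icc x 1 := ⟨le_refl x, hx1⟩
  have := hanti hmemx hmem1 hx1
  simp only [hg, Real.log_one] at this
  nlinarith [this]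

theorem refined_pinsker (pHat p : ℝ) (hpHat : pHat ∈ Set.Ioo (0:ℝ) 1) (hp : p ∈ Set.Ioo (0:ℝ) 1)
    (hlt : pHat < p) : binKL pHat p ≥ (p - pHat) ^ 2 / (2 * p) := by
  obtain ⟨hq0, hq1⟩ := hpHat
  obtain ⟨hp0, hp1⟩ := hp
  have hp1' : (0:ℝ) < 1 - p := by linarith
  have hq1' : (0:ℝ) < 1 - pHat := by linarith
  have hx0 : 0 < pHat / p := by positivity
  have hx1 : pHat / p ≤ 1 := le_of_lt ((div_lt_one hp0).mpr hlt)
  have h1 := logA_aux (pHat / p) hx0 hx1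
  have h2 := logB_aux ((1 - pHat) / (1 - p)) (by positivity)
  have e1 : pHat * Real.log (pHat / p) = p * ((pHat / p) * Real.log (pHat / p)) := by
    field_simp
  have e2 : (1 - pHat) * Real.log ((1 - pHat) / (1 - p))
      = (1 - p) * (((1 - pHat) / (1 - p)) * Real.log ((1 - pHat) / (1 - p))) := by
    field_simp
  have hxe : p * (pHat / p) = pHat := by field_simp
  have hye : (1 - p) * ((1 - pHat) / (1 - p)) = 1 - pHat := by field_simp
  rw [ge_iff_le, binKL, e1, e2, div_le_iff₀ (by positivity)]
  nlinarith [mul_le_mul_of_nonneg_left h1 (le_of_lt hp0),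
    mul_le_mul_of_nonneg_left h2 (le_of_lt hp1'), hxe, hye,
    sq_nonneg (p - pHat), mul_pos hp0 hp1']
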